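/- Under any oblivious message adversary whose graphs are all directed rooted trees on n nodes, dissemination completes within O(n log n) rounds; concretely, the dissemination time is at most ∑_{i=1}^{n} ⌈n/i⌉. -/

import Mathlib

/-- Influence sets: `influence G p r` is the set of processes that know
about `p` at the end of round `r`, where `G r` is the round-`r`
communication graph (edges `G r q q'` mean `q` sends to `q'`). -/
def influence {n : ℕ} (G : ℕ → Fin n → Fin n → Prop) (p : Fin n) : ℕ → Set (Fin n)
  | 0 => {p}
  | r + 1 => influence G p r ∪ {q' | ∃ q ∈ influence G p r, G (r + 1) q q'}

/-- `E` is a directed tree on `Fin n` rooted at `root`, edges oriented away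
from the root: every node is reachable from the root, every non-root node
has a unique parent, and the root has no parent. -/
def IsRootedTree {n : ℕ} (E : Fin n → Fin n → Prop) (root : Fin n) : Prop :=
  (∀ v, Relation.ReflTransGen E root v) ∧
  (∀ v, v ≠ root → ∃! u, E u v) ∧
  (∀ u, ¬ E u root)

/-- A leaf of a directed graph: a node with no outgoing edge. -/
def IsLeaf {n : ℕ} (E : Fin n → Fin n → Prop) (v : Fin n) : Prop := ∀ w, ¬ E v w

/-- The successor relation of the chain `σ 0 → σ 1 → ⋯ → σ (n-1)`. -/
def chainEdge {n : ℕ} (σ : Fin n ≃ Fin n) (u v : Fin n) : Prop :=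
  ∃ i j : Fin n, (j : ℕ) = (i : ℕ) + 1 ∧ u = σ i ∧ v = σ j

/-- `E` is a directed chain (rooted path) on all `n` nodes. -/
def IsDirChain {n : ℕ} (E : Fin n → Fin n → Prop) : Prop :=
  ∃ σ : Fin n ≃ Fin n, ∀ u v, E u v ↔ chainEdge σ u v

/-- `E` is an undirected path on all `n` nodes (messages traverse edges in
both directions). -/
def IsUndirPath {n : ℕ} (E : Fin n → Fin n → Prop) : Prop :=
  ∃ σ : Fin n ≃ Fin n, ∀ u v, E u v ↔ (chainEdge σ u v ∨ chainEdge σ v u)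

/-- The influence sets indexed by `I` cover `Π` at time `r`. -/
def isCovering {n : ℕ} (G : ℕ → Fin n → Fin n → Prop) (I : Set (Fin n)) (r : ℕ) : Prop :=
  ⋃ p ∈ I, influence G p r = Set.univ

/-- A strict covering: no member can be removed. -/
def isStrictCovering {n : ℕ} (G : ℕ → Fin n → Fin n → Prop) (I : Set (Fin n)) (r : ℕ) : Prop :=
  isCovering G I r ∧ ∀ p ∈ I, ¬ isCovering G (I \ {p}) r

section Aux

variable {n : ℕ} (G : ℕ → Fin n → Fin n → Prop)

lemma influence_succ (p : Fin n) (r : ℕ) :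
    influence G p (r+1) = influence G p r ∪ {q' | ∃ q ∈ influence G p r, G (r + 1) q q'} := rfl

lemma influence_mono (p : Fin n) : Monotone (influence G p) := by
  apply monotone_nat_of_le_succ
  intro r
  rw [influence_succ]
  exact Set.subset_union_left

/-- Finset version of covering. -/
def Cov (I : Finset (Fin n)) (t : ℕ) : Prop := ∀ v, ∃ p ∈ I, v ∈ influence G p t

lemma Cov_mono {I : Finset (Fin n)} {t t' : ℕ} (h : t ≤ t') (hc : Cov G I t) : Cov G I t' := by
  intro v
  obtain ⟨p, hp, hv⟩ := hc v
  exact ⟨p, hp, influence_mono G p h hv⟩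

/-- Nodes covered only by `q` among the indices in `I`. -/
def uniq (I : Finset (Fin n)) (q : Fin n) (t : ℕ) : Set (Fin n) :=
  {v | v ∈ influence G q t ∧ ∀ p ∈ I, p ≠ q → v ∉ influence G p t}

lemma crossing {E : Fin n → Fin n → Prop} {S : Set (Fin n)} {a b : Fin n}
    (h : Relation.ReflTransGen E a b) (ha : a ∉ S) (hb : b ∈ S) :
    ∃ u w, E u w ∧ u ∉ S ∧ w ∈ S := by
  revert hb
  induction h with
  | refl => exact fun hb => absurd hb ha
  | @tail b c hab hbc ih =>
    intro hc
    by_cases hm : b ∈ S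
    · exact ih hm
    · exact ⟨b, c, hbc, hm, hc⟩

lemma uniq_succ_subset {I : Finset (Fin n)} {t : ℕ} {q : Fin n} (hc : Cov G I t) :
    uniq G I q (t+1) ⊆ uniq G I q t := by
  rintro v ⟨hvq, hun⟩
  have hnot : ∀ p ∈ I, p ≠ q → v ∉ influence G p t := fun p hp hpq hv =>
    hun p hp hpq (influence_mono G p (Nat.le_succ t) hv)
  refine ⟨?_, hnot⟩
  rcases hvq with hv | hv
  · exact hv
  · obtain ⟨p, hp, hvp⟩ := hc v
    by_cases hpq : p = q
    · exact hpq ▸ hvp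
    · exact absurd hvp (hnot p hp hpq)

lemma uniq_shrink {I : Finset (Fin n)} {t : ℕ} {q ρ : Fin n} (hc : Cov G I t)
    (ht : IsRootedTree (G (t+1)) ρ) (hne : (uniq G I q t).Nonempty)
    (hρ : ρ ∉ uniq G I q t) :
    uniq G I q (t+1) ⊂ uniq G I q t := by
  rw [Set.ssubset_iff_subset_ne]
  refine ⟨uniq_succ_subset G hc, fun heq => ?_⟩
  obtain ⟨v, hv⟩ := hne
  obtain ⟨u, w, he, hu, hw⟩ := crossing (ht.1 v) hρ hv
  obtain ⟨p, hp, hpu⟩ := hc u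
  have hex : ∃ p' ∈ I, p' ≠ q ∧ u ∈ influence G p' t := by
    by_cases hpq : p = q
    · subst hpq
      simp only [uniq, Set.mem_setOf_eq] at hu
      push_neg at hu
      obtain ⟨p', hp', hpq', hup'⟩ := hu hpu
      exact ⟨p', hp', hpq', hup'⟩
    · exact ⟨p, hp, hpq, hpu⟩
  obtain ⟨p', hp', hpq', hup'⟩ := hex
  have hwp' : w ∈ influence G p' (t+1) := by
    rw [influence_succ]
    exact Or.inr ⟨u, hup', he⟩
  have hw1 : w ∈ uniq G I q (t+1) := heq ▸ hw
  exact hw1.2 p' hp' hpq' hwp'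

lemma uniq_disj {I : Finset (Fin n)} {t : ℕ} {q q' : Fin n} (hq' : q' ∈ I) (hne : q ≠ q')
    {v : Fin n} (h1 : v ∈ uniq G I q t) (h2 : v ∈ uniq G I q' t) : False :=
  h1.2 q' hq' (Ne.symm hne) h2.1

lemma phi_le (I : Finset (Fin n)) (t : ℕ) :
    ∑ q ∈ I, (uniq G I q t).ncard ≤ n := by
  classical
  calc ∑ q ∈ I, (uniq G I q t).ncard
      = ∑ q ∈ I, (Set.toFinite (uniq G I q t)).toFinset.card :=
        Finset.sum_congr rfl fun q _ => Set.ncard_eq_toFinset_card _ _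
    _ = (I.biUnion fun q => (Set.toFinite (uniq G I q t)).toFinset).card := by
        rw [Finset.card_biUnion]
        intro a ha b hb hab
        rw [Function.onFun, Finset.disjoint_left]
        intro v hva hvb
        rw [Set.Finite.mem_toFinset] at hva hvb
        exact uniq_disj G hb hab hva hvb
    _ ≤ (Finset.univ : Finset (Fin n)).card := Finset.card_le_univ _
    _ = n := by simp

lemma phi_step {I : Finset (Fin n)} {t x : ℕ} {ρ : Fin n} (hc : Cov G I t)
    (ht : IsRootedTree (G (t+1)) ρ) (hcard : I.card = x + 1)
    (hne : ∀ q ∈ I, (uniq G I q t).Nonempty) :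
    (∑ q ∈ I, (uniq G I q (t+1)).ncard) + x ≤ ∑ q ∈ I, (uniq G I q t).ncard := by
  classical
  have key : ∀ q ∈ I, (uniq G I q (t+1)).ncard + (if ρ ∈ uniq G I q t then 0 else 1)
      ≤ (uniq G I q t).ncard := by
    intro q hq
    by_cases h : ρ ∈ uniq G I q t
    · rw [if_pos h]
      have := Set.ncard_le_ncard (uniq_succ_subset G hc (q := q)) (Set.toFinite _)
      omega
    · rw [if_neg h]
      have := Set.ncard_lt_ncard (uniq_shrink G hc ht (hne q hq) h) (Set.toFinite _)
      omega
  have hsum := Finset.sum_le_sum key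
  rw [Finset.sum_add_distrib] at hsum
  have hfil : (I.filter (fun q => ρ ∈ uniq G I q t)).card ≤ 1 := by
    rw [Finset.card_le_one]
    intro a ha b hb
    rw [Finset.mem_filter] at ha hb
    by_contra hab
    exact uniq_disj G hb.1 hab ha.2 hb.2
  have hind : ∑ q ∈ I, (if ρ ∈ uniq G I q t then 0 else 1)
      = (I.filter (fun q => ¬ ρ ∈ uniq G I q t)).card := by
    rw [Finset.card_filter]
    refine Finset.sum_congr rfl fun q hq => ?_
    by_cases h : ρ ∈ uniq G I q t <;> simp [h]
  have hsplit := Finset.card_filter_add_card_filter_not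
    (s := I) (p := fun q => ρ ∈ uniq G I q t)
  omega

lemma uniq_empty_cov {I : Finset (Fin n)} {t : ℕ} {q : Fin n} (hc : Cov G I t)
    (h : uniq G I q t = ∅) : Cov G (I.erase q) t := by
  intro v
  by_cases hu : v ∈ uniq G I q t
  · rw [h] at hu
    exact absurd hu (Set.notMem_empty v)
  · simp only [uniq, Set.mem_setOf_eq] at hu
    push_neg at hu
    obtain ⟨p, hp, hpv⟩ := hc v
    by_cases hpq : p = q
    · subst hpq
      obtain ⟨p', hp', hpq', hvp'⟩ := hu hpv
      exact ⟨p', Finset.mem_erase.mpr ⟨hpq', hp'⟩, hvp'⟩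
    · exact ⟨p, Finset.mem_erase.mpr ⟨hpq, hp⟩, hpv⟩

lemma reduce {I : Finset (Fin n)} {x r : ℕ} (hx : 1 ≤ x) (hcard : I.card = x + 1)
    (hc : Cov G I r) (htree : ∀ s, 1 ≤ s → ∃ root, IsRootedTree (G s) root) :
    ∃ t ≤ r + (n + x - 1) / x, ∃ q ∈ I, Cov G (I.erase q) t := by
  classical
  by_contra hcon
  push_neg at hcon
  set k := (n + x - 1) / x with hk
  have hcov : ∀ j, Cov G I (r + j) := fun j => Cov_mono G (Nat.le_add_right r j) hc
  have hne : ∀ j ≤ k, ∀ q ∈ I, (uniq G I q (r + j)).Nonempty := by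
    intro j hj q hq
    rw [Set.nonempty_iff_ne_empty]
    intro hemp
    exact hcon (r + j) (by omega) q hq (uniq_empty_cov G (hcov j) hemp)
  have hphi : ∀ j, j ≤ k → (∑ q ∈ I, (uniq G I q (r + j)).ncard) + x * j
      ≤ ∑ q ∈ I, (uniq G I q r).ncard := by
    intro j
    induction j with
    | zero => simp
    | succ j ih =>
      intro hj
      obtain ⟨ρ, hρ⟩ := htree (r + j + 1) (by omega)
      have hstep := phi_step G (hcov j) hρ hcard (hne j (by omega))
      have hih := ih (by omega)
      have hrj : r + (j + 1) = (r + j) + 1 := by omega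
      rw [hrj, Nat.mul_succ]
      linarith
  have hlow : x + 1 ≤ ∑ q ∈ I, (uniq G I q (r + k)).ncard := by
    calc x + 1 = I.card := hcard.symm
      _ = ∑ _q ∈ I, 1 := Finset.card_eq_sum_ones I
      _ ≤ ∑ q ∈ I, (uniq G I q (r + k)).ncard :=
          Finset.sum_le_sum fun q hq =>
            (Set.ncard_pos (Set.toFinite _)).mpr (hne k le_rfl q hq)
  have hup := phi_le G I r
  have hkx : n ≤ x * k := by
    have h1 := Nat.div_add_mod (n + x - 1) x
    have h2 : (n + x - 1) % x < x := Nat.mod_lt _ (by omega)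
    rw [← hk] at h1
    generalize hA : x * k = A at h1 ⊢
    omega
  have hfin := hphi k le_rfl
  linarith

lemma main_lemma (hn : 0 < n) (htree : ∀ s, 1 ≤ s → ∃ root, IsRootedTree (G s) root) :
    ∀ x, 1 ≤ x → ∀ r (I : Finset (Fin n)), I.card ≤ x → Cov G I r →
    ∃ p, influence G p (r + ∑ i ∈ Finset.Icc 1 (x - 1), (n + i - 1) / i) = Set.univ := by
  intro x
  induction x with
  | zero => exact fun h => absurd h (by omega)
  | succ x ih =>
    intro _ r I hcard hc
    by_cases hx1 : x = 0
    · subst hx1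
      have hsum0 : (∑ i ∈ Finset.Icc 1 (0 + 1 - 1), (n + i - 1) / i) = 0 := by simp
      obtain ⟨p, hp, -⟩ := hc ⟨0, hn⟩
      refine ⟨p, ?_⟩
      rw [hsum0, Nat.add_zero]
      apply Set.eq_univ_of_forall
      intro v
      obtain ⟨p', hp', hv⟩ := hc v
      have : p' = p := Finset.card_le_one.mp hcard p' hp' p hp
      exact this ▸ hv
    · have hx : 1 ≤ x := by omega
      by_cases hle : I.card ≤ x
      · obtain ⟨p, hp⟩ := ih hx r I hle hc
        refine ⟨p, ?_⟩
        apply Set.eq_univ_of_univ_subset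
        rw [← hp]
        apply influence_mono
        have hmono : (∑ i ∈ Finset.Icc 1 (x - 1), (n + i - 1) / i)
            ≤ ∑ i ∈ Finset.Icc 1 (x + 1 - 1), (n + i - 1) / i :=
          Finset.sum_le_sum_of_subset (Finset.Icc_subset_Icc_right (by omega))
        omega
      · have hcard' : I.card = x + 1 := by omega
        obtain ⟨t, htk, q, hq, hcov'⟩ := reduce G hx hcard' hc htree
        have hcarde : (I.erase q).card ≤ x := by
          rw [Finset.card_erase_of_mem hq, hcard']
          omega
        obtain ⟨p, hp⟩ := ih hx t (I.erase q) hcarde hcov'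
        refine ⟨p, ?_⟩
        apply Set.eq_univ_of_univ_subset
        rw [← hp]
        apply influence_mono
        have hsum : (∑ i ∈ Finset.Icc 1 (x + 1 - 1), (n + i - 1) / i)
            = (∑ i ∈ Finset.Icc 1 (x - 1), (n + i - 1) / i) + (n + x - 1) / x := by
          obtain ⟨y, rfl⟩ : ∃ y, x = y + 1 := ⟨x - 1, by omega⟩
          have h1 : (y + 1 + 1 - 1) = y + 1 := by omega
          have h2 : (y + 1 - 1) = y := by omega
          rw [h1, h2, Finset.sum_Icc_succ_top (by omega : 1 ≤ y + 1)]
        omega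

end Aux

/-- under an oblivious message adversary whose graphs are all
rooted trees on `n` nodes, dissemination completes within
`∑_{i=1}^{n} ⌈n/i⌉` rounds (which is `O(n log n)`). -/
theorem dissemination_rooted_trees_nlogn {n : ℕ}
    (G : ℕ → Fin n → Fin n → Prop)
    (htree : ∀ r, 1 ≤ r → ∃ root, IsRootedTree (G r) root) :
    ∃ p : Fin n,
      influence G p (∑ i ∈ Finset.Icc 1 n, (n + i - 1) / i) = Set.univ := by
  rcases Nat.eq_zero_or_pos n with hn | hn
  · subst hn
    obtain ⟨root, -⟩ := htree 1 le_rfl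
    exact root.elim0
  · have hcov0 : Cov G Finset.univ 0 := fun v => ⟨v, Finset.mem_univ v, rfl⟩
    obtain ⟨p, hp⟩ := main_lemma G hn htree n hn 0 Finset.univ (by simp) hcov0
    refine ⟨p, ?_⟩
    apply Set.eq_univ_of_univ_subset
    rw [← hp]
    apply influence_mono
    have hmono : (∑ i ∈ Finset.Icc 1 (n - 1), (n + i - 1) / i)
        ≤ ∑ i ∈ Finset.Icc 1 n, (n + i - 1) / i :=
      Finset.sum_le_sum_of_subset (Finset.Icc_subset_Icc_right (by omega))
    omega
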